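/- arXiv:1907.11416 — 4 statements merged into one kernel-verified Lean document; each statement's English description precedes it below -/
import Mathlib

section
/- Let G = (V, E) be a simple undirected graph with V = {v_1, …, v_n}, let m ≤ ℓ and r be positive integers with ℓ, r < n, and let G' be the graph constructed from G as described. If L is any 1-distance m-tuple (ℓ, r)-dominating set of G', then |L ∩ (V² ∪ V³)| ≥ ℓ. -/
open Set

/-- Closed `d`-distance neighborhood `N^d_G[v]`: the set of vertices at shortest-path
distance at most `d` from `v` in `G`. -/
def closedNbhd {V : Type*} (G : SimpleGraph V) (d : ℕ) (v : V) : Set V :=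
  {u | G.Reachable u v ∧ G.dist u v ≤ d}

/-- `S` is a `d`-distance `m`-tuple `(ℓ, r)`-dominating set of `G`:
(i) every vertex has at least `m` vertices of `S` in its closed `d`-neighborhood, and
(ii) for every set `U` of `r` vertices, the union of the closed `d`-neighborhoods of the
vertices of `U` contains at least `ℓ` vertices of `S`. -/
def IsDistTupleDomSet {V : Type*} (G : SimpleGraph V) (d m ℓ r : ℕ) (S : Set V) : Prop :=
  (∀ v : V, m ≤ (closedNbhd G d v ∩ S).ncard) ∧
  (∀ U : Set V, U.ncard = r → ℓ ≤ ((⋃ u ∈ U, closedNbhd G d u) ∩ S).ncard)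

/-- Adjacency of the graph `G'` built from `G`: `V¹` is a copy of `V` retaining the edges of
`G` (encoded as `Sum.inl`), `V² = Fin (ℓ - 1)` (encoded as `Sum.inr ∘ Sum.inl`) induces a
clique joined completely to `V¹`, and `V³ = Fin r` (encoded as `Sum.inr ∘ Sum.inr`) is joined
completely to `V²`. -/
def primeAdj {V : Type*} (G : SimpleGraph V) (ℓ r : ℕ) :
    V ⊕ (Fin (ℓ - 1) ⊕ Fin r) → V ⊕ (Fin (ℓ - 1) ⊕ Fin r) → Prop
  | Sum.inl a, Sum.inl b => G.Adj a b
  | Sum.inl _, Sum.inr (Sum.inl _) => True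
  | Sum.inr (Sum.inl _), Sum.inl _ => True
  | Sum.inr (Sum.inl a), Sum.inr (Sum.inl b) => a ≠ b
  | Sum.inr (Sum.inl _), Sum.inr (Sum.inr _) => True
  | Sum.inr (Sum.inr _), Sum.inr (Sum.inl _) => True
  | _, _ => False

/-- The graph `G' = (V¹ ∪ V² ∪ V³, E¹ ∪ E² ∪ E³ ∪ E⁴)` constructed from `G`. -/
def Gprime {V : Type*} (G : SimpleGraph V) (ℓ r : ℕ) :
    SimpleGraph (V ⊕ (Fin (ℓ - 1) ⊕ Fin r)) where
  Adj := primeAdj G ℓ r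
  symm := by
    constructor
    rintro (a | b | c) (a' | b' | c') h <;> simp_all [primeAdj]
    · exact h.symm
    · exact Ne.symm h
  loopless := by
    constructor
    rintro (a | b | c) h <;> simp_all [primeAdj]

/-- If `L` is any 1-distance `m`-tuple `(ℓ, r)`-dominating set of `G'`, then
`|L ∩ (V² ∪ V³)| ≥ ℓ` (here `V² ∪ V³ = Set.range Sum.inr`). -/
theorem stmt_1 {V : Type*} [Fintype V] (G : SimpleGraph V) (m ℓ r : ℕ)
    (hm : 0 < m) (hl : 0 < ℓ) (hr : 0 < r) (hml : m ≤ ℓ)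
    (hln : ℓ < Fintype.card V) (hrn : r < Fintype.card V)
    (L : Set (V ⊕ (Fin (ℓ - 1) ⊕ Fin r)))
    (hL : IsDistTupleDomSet (Gprime G ℓ r) 1 m ℓ r L) :
    ℓ ≤ (L ∩ Set.range Sum.inr).ncard := by
  obtain ⟨-, h2⟩ := hL
  set U : Set (V ⊕ (Fin (ℓ - 1) ⊕ Fin r)) :=
    Set.range (fun i : Fin r => Sum.inr (Sum.inr i)) with hU
  have hcard : U.ncard = r := by
    rw [hU, ← Set.image_univ,
      Set.ncard_image_of_injective _ (fun a b h => by simpa using h), Set.ncard_univ]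
    simp
  have key := h2 U hcard
  refine le_trans key (Set.ncard_le_ncard ?_ (Set.toFinite _))
  rintro x ⟨hx1, hx2⟩
  simp only [Set.mem_iUnion] at hx1
  obtain ⟨u, ⟨i, rfl⟩, hreach, hdist⟩ := hx1
  refine ⟨hx2, ?_⟩
  rcases x with a | b
  · exfalso
    interval_cases h : (Gprime G ℓ r).dist (Sum.inl a) (Sum.inr (Sum.inr i))
    · exact absurd (hreach.dist_eq_zero_iff.mp h) (by simp)
    · exact (SimpleGraph.dist_eq_one_iff_adj.mp h)
  · exact ⟨b, rfl⟩
end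

section
/- Let G = (V, E) be a simple undirected graph with V = {v_1, …, v_n}, let m ≤ ℓ and r be positive integers with ℓ, r < n, and let G' be the graph constructed from G as described. Let L be a 1-distance m-tuple (ℓ, r)-dominating set of G' and set D = {v_i ∈ V : v_i¹ ∈ L}. Then every subset U¹ ⊆ V satisfying (⋃_{u ∈ U¹} N¹_G[u]) ∩ D = ∅ has |U¹| ≤ r − 1. -/
open Set

/-- If `L` is a 1-distance `m`-tuple `(ℓ, r)`-dominating set of `G'` and
`D = {vᵢ ∈ V : vᵢ¹ ∈ L}`, then every subset `U¹ ⊆ V` with `(⋃_{u ∈ U¹} N¹_G[u]) ∩ D = ∅`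
satisfies `|U¹| ≤ r - 1`. -/
theorem stmt_2 {V : Type*} [Fintype V] (G : SimpleGraph V) (m ℓ r : ℕ)
    (hm : 0 < m) (hl : 0 < ℓ) (hr : 0 < r) (hml : m ≤ ℓ)
    (hln : ℓ < Fintype.card V) (hrn : r < Fintype.card V)
    (L : Set (V ⊕ (Fin (ℓ - 1) ⊕ Fin r)))
    (hL : IsDistTupleDomSet (Gprime G ℓ r) 1 m ℓ r L)
    (D : Set V) (hD : D = {v : V | Sum.inl v ∈ L}) :
    ∀ U : Set V, (⋃ u ∈ U, closedNbhd G 1 u) ∩ D = ∅ → U.ncard ≤ r - 1 := by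
  subst hD
  intro U hU
  by_contra hcon
  push_neg at hcon
  have hrU : r ≤ U.ncard := by omega
  obtain ⟨U', hU'sub, hU'card⟩ := Set.exists_subset_card_eq hrU
  have hcard : (Sum.inl '' U' : Set (V ⊕ (Fin (ℓ - 1) ⊕ Fin r))).ncard = r := by
    rw [Set.ncard_image_of_injective _ Sum.inl_injective, hU'card]
  have key := hL.2 _ hcard
  set V2 : Set (V ⊕ (Fin (ℓ - 1) ⊕ Fin r)) :=
    Set.range (fun i : Fin (ℓ - 1) => Sum.inr (Sum.inl i)) with hV2
  have hsub : (⋃ u ∈ (Sum.inl '' U' : Set (V ⊕ (Fin (ℓ - 1) ⊕ Fin r))),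
      closedNbhd (Gprime G ℓ r) 1 u) ∩ L ⊆ V2 := by
    rintro w ⟨hw1, hwL⟩
    simp only [Set.mem_iUnion, Set.mem_image] at hw1
    obtain ⟨x, ⟨u, hu, rfl⟩, hreach, hdist⟩ := hw1
    match w with
    | Sum.inl b =>
      exfalso
      have hb : b ∈ closedNbhd G 1 u := by
        by_cases hbu : b = u
        · subst hbu
          exact ⟨SimpleGraph.Reachable.refl _, by rw [SimpleGraph.dist_self]; omega⟩
        · have hne : Sum.inl b ≠ (Sum.inl u : V ⊕ (Fin (ℓ - 1) ⊕ Fin r)) := by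
            simpa using hbu
          have hd1 : (Gprime G ℓ r).dist (Sum.inl b) (Sum.inl u) = 1 := by
            have h0 : (Gprime G ℓ r).dist (Sum.inl b) (Sum.inl u) ≠ 0 :=
              fun h => hne (hreach.dist_eq_zero_iff.mp h)
            omega
          have hadj : (Gprime G ℓ r).Adj (Sum.inl b) (Sum.inl u) :=
            SimpleGraph.dist_eq_one_iff_adj.mp hd1
          have hGadj : G.Adj b u := hadj
          exact ⟨hGadj.reachable, by rw [SimpleGraph.dist_eq_one_iff_adj.mpr hGadj]⟩
      have : b ∈ (⋃ u ∈ U, closedNbhd G 1 u) ∩ {v : V | Sum.inl v ∈ L} := by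
        refine ⟨Set.mem_biUnion (hU'sub hu) hb, hwL⟩
      rw [hU] at this
      exact this
    | Sum.inr (Sum.inl i) => exact ⟨i, rfl⟩
    | Sum.inr (Sum.inr j) =>
      exfalso
      have hne : (Sum.inr (Sum.inr j) : V ⊕ (Fin (ℓ - 1) ⊕ Fin r)) ≠ Sum.inl u := by simp
      have hd1 : (Gprime G ℓ r).dist (Sum.inr (Sum.inr j)) (Sum.inl u) = 1 := by
        have h0 : (Gprime G ℓ r).dist (Sum.inr (Sum.inr j)) (Sum.inl u) ≠ 0 :=
          fun h => hne (hreach.dist_eq_zero_iff.mp h)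
        omega
      have hadj : (Gprime G ℓ r).Adj (Sum.inr (Sum.inr j)) (Sum.inl u) :=
        SimpleGraph.dist_eq_one_iff_adj.mp hd1
      exact hadj
  have hV2card : V2.ncard = ℓ - 1 := by
    rw [hV2, ← Set.image_univ,
      Set.ncard_image_of_injective _ (fun a b h => by
        simpa using h)]
    simp [Set.ncard_univ]
  have hle : ((⋃ u ∈ (Sum.inl '' U' : Set (V ⊕ (Fin (ℓ - 1) ⊕ Fin r))),
      closedNbhd (Gprime G ℓ r) 1 u) ∩ L).ncard ≤ V2.ncard :=
    Set.ncard_le_ncard hsub (Set.toFinite _)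
  omega
end

section
/- Let G = (V, E) be a simple undirected graph with V = {v_1, …, v_n}, let m ≤ ℓ and r be positive integers with ℓ, r < n, and let G' be the graph constructed from G as described. Let L be a 1-distance m-tuple (ℓ, r)-dominating set of G' and set D = {v_i ∈ V : v_i¹ ∈ L}. If U¹ ⊆ V is a nonempty set with |U¹| = s such that (⋃_{u ∈ U¹} N¹_G[u]) ∩ D = ∅, then |L ∩ (V² ∪ V³)| ≥ ℓ + s. -/
open Set

lemma mem_closedNbhd_one {V : Type*} {G : SimpleGraph V} {u v : V} :
    u ∈ closedNbhd G 1 v ↔ u = v ∨ G.Adj u v := by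
  constructor
  · rintro ⟨hre, hd⟩
    obtain ⟨p, hp⟩ := hre.exists_walk_length_eq_dist
    cases p with
    | nil => exact Or.inl rfl
    | cons h q =>
      cases q with
      | nil => exact Or.inr h
      | cons h' q' => simp [SimpleGraph.Walk.length_cons] at hp; omega
  · rintro (rfl | h)
    · exact ⟨SimpleGraph.Reachable.refl u, by simp [SimpleGraph.dist_self]⟩
    · refine ⟨h.reachable, ?_⟩
      have := SimpleGraph.dist_le (SimpleGraph.Walk.cons h SimpleGraph.Walk.nil)
      simpa using this

/-- If `L` is a 1-distance `m`-tuple `(ℓ, r)`-dominating set of `G'`,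
`D = {vᵢ ∈ V : vᵢ¹ ∈ L}`, and `U¹ ⊆ V` is a nonempty set with `|U¹| = s` such that
`(⋃_{u ∈ U¹} N¹_G[u]) ∩ D = ∅`, then `|L ∩ (V² ∪ V³)| ≥ ℓ + s`. -/
theorem stmt_3 {V : Type*} [Fintype V] (G : SimpleGraph V) (m ℓ r : ℕ)
    (hm : 0 < m) (hl : 0 < ℓ) (hr : 0 < r) (hml : m ≤ ℓ)
    (hln : ℓ < Fintype.card V) (hrn : r < Fintype.card V)
    (L : Set (V ⊕ (Fin (ℓ - 1) ⊕ Fin r)))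
    (hL : IsDistTupleDomSet (Gprime G ℓ r) 1 m ℓ r L)
    (D : Set V) (hD : D = {v : V | Sum.inl v ∈ L})
    (U : Set V) (s : ℕ) (hUne : U.Nonempty) (hUs : U.ncard = s)
    (hUD : (⋃ u ∈ U, closedNbhd G 1 u) ∩ D = ∅) :
    ℓ + s ≤ (L ∩ Set.range Sum.inr).ncard := by
  classical
  set V2 : Set (V ⊕ (Fin (ℓ - 1) ⊕ Fin r)) :=
    Set.range (fun b : Fin (ℓ - 1) => Sum.inr (Sum.inl b)) with hV2
  set V3 : Set (V ⊕ (Fin (ℓ - 1) ⊕ Fin r)) :=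
    Set.range (fun x : Fin r => Sum.inr (Sum.inr x)) with hV3
  have hV2card : V2.ncard = ℓ - 1 := by
    rw [hV2, ← Set.image_univ,
      Set.ncard_image_of_injective _ (fun a b h => by simp only [Sum.inr.injEq, Sum.inl.injEq] at h; exact h), Set.ncard_univ]
    simp
  have hV3card : V3.ncard = r := by
    rw [hV3, ← Set.image_univ,
      Set.ncard_image_of_injective _ (fun a b h => by simp only [Sum.inr.injEq] at h; exact h), Set.ncard_univ]
    simp
  -- no vertex of a closed neighborhood of U lies in L (as inl)
  have hD' : ∀ u ∈ U, ∀ v ∈ closedNbhd G 1 u, Sum.inl v ∉ L := by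
    intro u hu v hv hvL
    have : v ∈ (⋃ u ∈ U, closedNbhd G 1 u) ∩ D :=
      ⟨Set.mem_biUnion hu hv, by rw [hD]; exact hvL⟩
    rw [hUD] at this
    exact this
  -- master subset bound
  have key : ∀ U₀ ⊆ U, ∀ Z ⊆ V3,
      (⋃ w ∈ (Sum.inl '' U₀ ∪ Z), closedNbhd (Gprime G ℓ r) 1 w) ∩ L ⊆ (V2 ∩ L) ∪ (Z ∩ L) := by
    intro U₀ hU₀ Z hZ w hw
    obtain ⟨hwU, hwL⟩ := hw
    simp only [Set.mem_iUnion, exists_prop] at hwU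
    obtain ⟨w₀, hw₀, hmem⟩ := hwU
    rcases hw₀ with ⟨u, hu, rfl⟩ | hz
    · -- w₀ = inl u with u ∈ U₀
      rcases mem_closedNbhd_one.mp hmem with rfl | hadj
      · exact absurd hwL (hD' u (hU₀ hu) u (mem_closedNbhd_one.mpr (Or.inl rfl)))
      · have hadj' : primeAdj G ℓ r w (Sum.inl u) := hadj
        rcases w with v | b | x
        · have : G.Adj v u := hadj'
          exact absurd hwL (hD' u (hU₀ hu) v (mem_closedNbhd_one.mpr (Or.inr this)))
        · exact Or.inl ⟨⟨b, rfl⟩, hwL⟩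
        · exact absurd hadj' (by simp [primeAdj])
    · -- w₀ ∈ Z ⊆ V3
      obtain ⟨x, rfl⟩ := hZ hz
      rcases mem_closedNbhd_one.mp hmem with rfl | hadj
      · exact Or.inr ⟨hz, hwL⟩
      · have hadj' : primeAdj G ℓ r w (Sum.inr (Sum.inr x)) := hadj
        rcases w with v | b | y
        · exact absurd hadj' (by simp [primeAdj])
        · exact Or.inl ⟨⟨b, rfl⟩, hwL⟩
        · exact absurd hadj' (by simp [primeAdj])
  -- the main counting bound from condition (ii)
  have bound : ∀ U₀ ⊆ U, ∀ Z ⊆ V3, U₀.ncard + Z.ncard = r →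
      ℓ ≤ (V2 ∩ L).ncard + (Z ∩ L).ncard := by
    intro U₀ hU₀ Z hZ hcard
    have hdisj : Disjoint (Sum.inl '' U₀) Z := by
      rw [Set.disjoint_left]
      rintro _ ⟨u, -, rfl⟩ hz
      obtain ⟨x, h⟩ := hZ hz
      cases h
    have hcard' : (Sum.inl '' U₀ ∪ Z).ncard = r := by
      rw [Set.ncard_union_eq hdisj (Set.toFinite _) (Set.toFinite _),
        Set.ncard_image_of_injective _ Sum.inl_injective, hcard]
    have h1 := hL.2 (Sum.inl '' U₀ ∪ Z) hcard'
    calc ℓ ≤ ((⋃ w ∈ (Sum.inl '' U₀ ∪ Z), closedNbhd (Gprime G ℓ r) 1 w) ∩ L).ncard := h1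
      _ ≤ ((V2 ∩ L) ∪ (Z ∩ L)).ncard :=
          Set.ncard_le_ncard (key U₀ hU₀ Z hZ) (Set.toFinite _)
      _ ≤ (V2 ∩ L).ncard + (Z ∩ L).ncard := Set.ncard_union_le _ _
  have hc : (V2 ∩ L).ncard ≤ ℓ - 1 := by
    calc (V2 ∩ L).ncard ≤ V2.ncard := Set.ncard_le_ncard Set.inter_subset_left (Set.toFinite _)
      _ = ℓ - 1 := hV2card
  by_cases hsr : r ≤ s
  · -- contradiction: take an r-subset of U
    exfalso
    obtain ⟨U₀, hU₀, hU₀c⟩ := Set.exists_subset_card_eq (show r ≤ U.ncard by omega)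
    have := bound U₀ hU₀ ∅ (Set.empty_subset _) (by simp [hU₀c])
    simp only [Set.empty_inter, Set.ncard_empty, add_zero] at this
    omega
  · push_neg at hsr
    set B := V3 \ L with hB
    set T := V3 ∩ L with hT
    have hBT : T.ncard + B.ncard = r := by
      rw [hT, hB, Set.ncard_inter_add_ncard_diff_eq_ncard V3 L (Set.toFinite _), hV3card]
    by_cases hBc : r - s ≤ B.ncard
    · -- contradiction: fill with r - s non-L vertices of V³
      exfalso
      obtain ⟨X, hXB, hXc⟩ := Set.exists_subset_card_eq hBc
      have hXL : X ∩ L = ∅ := by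
        apply Set.eq_empty_of_forall_notMem
        rintro x ⟨hx, hxL⟩
        exact (hXB hx).2 hxL
      have := bound U Set.Subset.rfl X (hXB.trans Set.diff_subset) (by omega)
      rw [hXL] at this
      simp at this
      omega
    · push_neg at hBc
      -- B ∪ Y with Y ⊆ T, |Y| = r - s - |B|
      have hq : r - s - B.ncard ≤ T.ncard := by omega
      obtain ⟨Y, hYT, hYc⟩ := Set.exists_subset_card_eq hq
      have hYL : Y ⊆ L := fun y hy => (hYT hy).2
      have hdBY : Disjoint B Y := by
        rw [Set.disjoint_left]
        intro x hx hxY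
        exact hx.2 (hYL hxY)
      have hZ3 : B ∪ Y ⊆ V3 := Set.union_subset Set.diff_subset (hYT.trans Set.inter_subset_left)
      have hZc : (B ∪ Y).ncard = B.ncard + (r - s - B.ncard) := by
        rw [Set.ncard_union_eq hdBY (Set.toFinite _) (Set.toFinite _), hYc]
      have hbd := bound U Set.Subset.rfl (B ∪ Y) hZ3 (by omega)
      have hZL : (B ∪ Y) ∩ L ⊆ Y := by
        rintro x ⟨hx | hx, hxL⟩
        · exact absurd hxL hx.2
        · exact hx
      have hZLc : ((B ∪ Y) ∩ L).ncard ≤ r - s - B.ncard :=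
        hYc ▸ Set.ncard_le_ncard hZL (Set.toFinite _)
      -- final assembly
      have hsub : (V2 ∩ L) ∪ T ⊆ L ∩ Set.range Sum.inr := by
        rintro x (⟨⟨b, rfl⟩, hxL⟩ | ⟨⟨y, rfl⟩, hxL⟩)
        · exact ⟨hxL, ⟨Sum.inl b, rfl⟩⟩
        · exact ⟨hxL, ⟨Sum.inr y, rfl⟩⟩
      have hd23 : Disjoint (V2 ∩ L) T := by
        rw [Set.disjoint_left]
        rintro x ⟨⟨b, rfl⟩, -⟩ ⟨⟨y, h⟩, -⟩
        injection h with h2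
        cases h2
      have hfin : ((V2 ∩ L) ∪ T).ncard = (V2 ∩ L).ncard + T.ncard :=
        Set.ncard_union_eq hd23 (Set.toFinite _) (Set.toFinite _)
      have hle : ((V2 ∩ L) ∪ T).ncard ≤ (L ∩ Set.range Sum.inr).ncard :=
        Set.ncard_le_ncard hsub (Set.toFinite _)
      omega
end

section
/- Let G = (V, E) be a simple undirected graph with V = {v_1, …, v_n}, let m ≤ ℓ and r be positive integers with ℓ, r < n, and let G' be the graph constructed from G as described. If G' has a 1-distance m-tuple (ℓ, r)-dominating set of cardinality at most k + ℓ, then G has a dominating set of cardinality at most k. -/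
open Set

/-- `D` is a dominating set of `G`: every vertex is in the closed `1`-neighborhood of some
vertex of `D`. -/
def IsDomSet {V : Type*} (G : SimpleGraph V) (D : Set V) : Prop :=
  ∀ v : V, ∃ u ∈ D, u ∈ closedNbhd G 1 v

lemma closedNbhd_one {V : Type*} (G : SimpleGraph V) (v : V) :
    closedNbhd G 1 v = {u | u = v ∨ G.Adj u v} := by
  ext u
  simp only [closedNbhd, Set.mem_setOf_eq]
  constructor
  · rintro ⟨hreach, hd⟩
    interval_cases h : G.dist u v
    · exact Or.inl (hreach.dist_eq_zero_iff.mp h)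
    · exact Or.inr (SimpleGraph.dist_eq_one_iff_adj.mp h)
  · rintro (rfl | hadj)
    · exact ⟨SimpleGraph.Reachable.refl u, by rw [SimpleGraph.dist_self]; omega⟩
    · exact ⟨hadj.reachable, le_of_eq (SimpleGraph.dist_eq_one_iff_adj.mpr hadj)⟩

lemma inj2 {V : Type*} {ℓ r : ℕ} :
    Function.Injective (fun b : Fin (ℓ - 1) => (Sum.inr (Sum.inl b) : V ⊕ (Fin (ℓ - 1) ⊕ Fin r))) := by
  intro a b h; simpa using h

lemma inj3 {V : Type*} {ℓ r : ℕ} :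
    Function.Injective (fun c : Fin r => (Sum.inr (Sum.inr c) : V ⊕ (Fin (ℓ - 1) ⊕ Fin r))) := by
  intro a b h; simpa using h

/-- If `G'` has a 1-distance `m`-tuple `(ℓ, r)`-dominating set of cardinality at
most `k + ℓ`, then `G` has a dominating set of cardinality at most `k`. -/
theorem stmt_4 {V : Type*} [Fintype V] (G : SimpleGraph V) (m ℓ r : ℕ)
    (hm : 0 < m) (hl : 0 < ℓ) (hr : 0 < r) (hml : m ≤ ℓ)
    (hln : ℓ < Fintype.card V) (hrn : r < Fintype.card V) (k : ℕ)
    (h : ∃ L : Set (V ⊕ (Fin (ℓ - 1) ⊕ Fin r)),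
      IsDistTupleDomSet (Gprime G ℓ r) 1 m ℓ r L ∧ L.ncard ≤ k + ℓ) :
    ∃ D : Set V, IsDomSet G D ∧ D.ncard ≤ k := by
  classical
  obtain ⟨L, ⟨h1, h2⟩, hcard⟩ := h
  set P : Set V := {v | Sum.inl v ∈ L} with hP
  set W : Set V := {v | ∀ u ∈ P, u ∉ closedNbhd G 1 v} with hW
  set L2 : Set (Fin (ℓ - 1)) := {b | Sum.inr (Sum.inl b) ∈ L} with hL2
  set A3 : Set (Fin r) := {c | Sum.inr (Sum.inr c) ∈ L} with hA3
  -- basic cardinality facts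
  have hs : L2.ncard ≤ ℓ - 1 := by
    have := Set.ncard_le_ncard (Set.subset_univ L2) (Set.toFinite _)
    simpa [Set.ncard_univ] using this
  have ht : A3.ncard ≤ r := by
    have := Set.ncard_le_ncard (Set.subset_univ A3) (Set.toFinite _)
    simpa [Set.ncard_univ] using this
  -- decomposition of L
  have hLdec : L = Sum.inl '' P ∪
      ((fun b : Fin (ℓ - 1) => (Sum.inr (Sum.inl b) : V ⊕ (Fin (ℓ - 1) ⊕ Fin r))) '' L2 ∪
       (fun c : Fin r => (Sum.inr (Sum.inr c) : V ⊕ (Fin (ℓ - 1) ⊕ Fin r))) '' A3) := by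
    ext x
    rcases x with a | b | c <;> simp [hP, hL2, hA3]
  have hcount : L.ncard = P.ncard + L2.ncard + A3.ncard := by
    rw [hLdec, Set.ncard_union_eq, Set.ncard_union_eq]
    · rw [Set.ncard_image_of_injective _ Sum.inl_injective,
        Set.ncard_image_of_injective _ inj2, Set.ncard_image_of_injective _ inj3]
      ring
    · rw [Set.disjoint_left]; rintro x ⟨b, -, rfl⟩ ⟨c, -, hc⟩; simp at hc
    · rw [Set.disjoint_left]
      rintro x ⟨v, -, rfl⟩ (⟨b, -, hb⟩ | ⟨c, -, hc⟩)
      · exact Sum.inr_ne_inl hb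
      · exact Sum.inr_ne_inl hc
  -- membership facts about closed neighborhoods in G'
  have hmemW : ∀ (w : V) (x : V ⊕ (Fin (ℓ - 1) ⊕ Fin r)), w ∈ W → x ∈ L →
      x ∈ closedNbhd (Gprime G ℓ r) 1 (Sum.inl w) →
      ∃ b : Fin (ℓ - 1), x = Sum.inr (Sum.inl b) ∧ b ∈ L2 := by
    intro w x hwW hxL hx
    rw [closedNbhd_one] at hx
    rcases x with a | b | c
    · exfalso
      have haP : a ∈ P := hxL
      have : a ∈ closedNbhd G 1 w := by
        rw [closedNbhd_one]
        rcases hx with hx | hx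
        · exact Or.inl (by injection hx)
        · exact Or.inr hx
      exact hwW a haP this
    · exact ⟨b, rfl, hxL⟩
    · exfalso
      rcases hx with hx | hx
      · exact Sum.inr_ne_inl hx
      · exact hx
  have hmemT : ∀ (c : Fin r) (x : V ⊕ (Fin (ℓ - 1) ⊕ Fin r)), x ∈ L →
      x ∈ closedNbhd (Gprime G ℓ r) 1 (Sum.inr (Sum.inr c)) →
      (∃ b : Fin (ℓ - 1), x = Sum.inr (Sum.inl b) ∧ b ∈ L2) ∨
      (x = Sum.inr (Sum.inr c) ∧ c ∈ A3) := by
    intro c x hxL hx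
    rw [closedNbhd_one] at hx
    rcases x with a | b | c'
    · exfalso
      rcases hx with hx | hx
      · exact Sum.inl_ne_inr hx
      · exact hx
    · exact Or.inl ⟨b, rfl, hxL⟩
    · rcases hx with hx | hx
      · right
        refine ⟨hx, ?_⟩
        have : c' = c := by simpa using hx
        subst this; exact hxL
      · exact absurd hx (by exact fun h => h)
  -- Step A : W.ncard < r
  have hWlt : W.ncard < r := by
    by_contra hge
    push_neg at hge
    obtain ⟨W', hW'sub, hW'card⟩ := Set.exists_subset_card_eq hge
    have hU : (Sum.inl '' W' : Set (V ⊕ (Fin (ℓ - 1) ⊕ Fin r))).ncard = r := by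
      rw [Set.ncard_image_of_injective _ Sum.inl_injective, hW'card]
    have hle := h2 _ hU
    have hsub : ((⋃ u ∈ Sum.inl '' W', closedNbhd (Gprime G ℓ r) 1 u) ∩ L) ⊆
        (fun b : Fin (ℓ - 1) => (Sum.inr (Sum.inl b) : V ⊕ (Fin (ℓ - 1) ⊕ Fin r))) '' L2 := by
      rintro x ⟨hxU, hxL⟩
      simp only [Set.mem_iUnion] at hxU
      obtain ⟨u, ⟨w, hwW', rfl⟩, hx⟩ := hxU
      obtain ⟨b, rfl, hb⟩ := hmemW w x (hW'sub hwW') hxL hx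
      exact ⟨b, hb, rfl⟩
    have := Set.ncard_le_ncard hsub (Set.toFinite _)
    rw [Set.ncard_image_of_injective _ inj2] at this
    omega
  -- Step B: choose T ⊆ Fin r with |T| = r - |W| and |T ∩ A3| ≤ |A3| - |W|
  obtain ⟨T, hTcard, hTA3⟩ : ∃ T : Set (Fin r),
      T.ncard = r - W.ncard ∧ (T ∩ A3).ncard ≤ A3.ncard - W.ncard := by
    have hcompl : (A3ᶜ : Set (Fin r)).ncard = r - A3.ncard := by
      have := Set.ncard_add_ncard_compl A3 (Set.toFinite _) (Set.toFinite _)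
      simp only [Nat.card_eq_fintype_card, Fintype.card_fin] at this
      omega
    by_cases hcase : A3.ncard ≤ W.ncard
    · obtain ⟨T, hTsub, hTc⟩ : ∃ T ⊆ (A3ᶜ : Set (Fin r)), T.ncard = r - W.ncard :=
        Set.exists_subset_card_eq (by omega)
      refine ⟨T, hTc, ?_⟩
      have : T ∩ A3 = ∅ := by
        rw [Set.eq_empty_iff_forall_notMem]
        rintro x ⟨hxT, hxA⟩
        exact hTsub hxT hxA
      simp [this]
    · push_neg at hcase
      obtain ⟨D', hD'sub, hD'c⟩ : ∃ D' ⊆ A3, D'.ncard = A3.ncard - W.ncard :=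
        Set.exists_subset_card_eq (by omega)
      refine ⟨A3ᶜ ∪ D', ?_, ?_⟩
      · rw [Set.ncard_union_eq]
        · omega
        · rw [Set.disjoint_left]; intro x hx hx'; exact hx (hD'sub hx')
      · have : (A3ᶜ ∪ D') ∩ A3 = D' := by
          ext x
          constructor
          · rintro ⟨hx | hx, hxA⟩
            · exact absurd hxA hx
            · exact hx
          · intro hx; exact ⟨Or.inr hx, hD'sub hx⟩
        rw [this, hD'c]
  -- apply condition (ii) to U = inl '' W ∪ (inr∘inr) '' T
  have hkey : ℓ + W.ncard ≤ L2.ncard + A3.ncard := by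
    set U : Set (V ⊕ (Fin (ℓ - 1) ⊕ Fin r)) := Sum.inl '' W ∪
        (fun c : Fin r => (Sum.inr (Sum.inr c) : V ⊕ (Fin (ℓ - 1) ⊕ Fin r))) '' T with hUdef
    have hUcard : U.ncard = r := by
      rw [hUdef, Set.ncard_union_eq]
      · rw [Set.ncard_image_of_injective _ Sum.inl_injective,
          Set.ncard_image_of_injective _ inj3, hTcard]
        omega
      · rw [Set.disjoint_left]; rintro x ⟨v, -, rfl⟩ ⟨c, -, hc⟩; simp at hc
    have hle := h2 _ hUcard
    have hsub : ((⋃ u ∈ U, closedNbhd (Gprime G ℓ r) 1 u) ∩ L) ⊆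
        (fun b : Fin (ℓ - 1) => (Sum.inr (Sum.inl b) : V ⊕ (Fin (ℓ - 1) ⊕ Fin r))) '' L2 ∪
        (fun c : Fin r => (Sum.inr (Sum.inr c) : V ⊕ (Fin (ℓ - 1) ⊕ Fin r))) '' (T ∩ A3) := by
      rintro x ⟨hxU, hxL⟩
      simp only [Set.mem_iUnion] at hxU
      obtain ⟨u, huU, hx⟩ := hxU
      rcases huU with ⟨w, hwW, rfl⟩ | ⟨c, hcT, rfl⟩
      · obtain ⟨b, rfl, hb⟩ := hmemW w x hwW hxL hx
        exact Or.inl ⟨b, hb, rfl⟩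
      · rcases hmemT c x hxL hx with ⟨b, rfl, hb⟩ | ⟨rfl, hc⟩
        · exact Or.inl ⟨b, hb, rfl⟩
        · exact Or.inr ⟨c, ⟨hcT, hc⟩, rfl⟩
    have hub := Set.ncard_le_ncard hsub (Set.toFinite _)
    have hub2 := Set.ncard_union_le
      ((fun b : Fin (ℓ - 1) => (Sum.inr (Sum.inl b) : V ⊕ (Fin (ℓ - 1) ⊕ Fin r))) '' L2)
      ((fun c : Fin r => (Sum.inr (Sum.inr c) : V ⊕ (Fin (ℓ - 1) ⊕ Fin r))) '' (T ∩ A3))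
    rw [Set.ncard_image_of_injective _ inj2, Set.ncard_image_of_injective _ inj3] at hub2
    omega
  -- conclusion
  refine ⟨P ∪ W, ?_, ?_⟩
  · intro v
    by_cases hv : v ∈ W
    · refine ⟨v, Or.inr hv, ?_⟩
      rw [closedNbhd_one]; exact Or.inl rfl
    · rw [hW, Set.mem_setOf_eq] at hv
      push_neg at hv
      obtain ⟨u, huP, hu⟩ := hv
      exact ⟨u, Or.inl huP, hu⟩
  · have := Set.ncard_union_le P W
    omega
end
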